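/- arXiv:2210.02951 — 10 statements merged into one kernel-verified Lean document; each statement's English description precedes it below -/
import Mathlib

section
/- Let R be a commutative ring and M, N be R-modules. If M ⊗[R] N is isomorphic as an R-module to R^n for some n ≥ 1, then M and N are both finitely generated projective R-modules. -/
open TensorProduct

private lemma stmt_0_aux {R M N : Type*} [CommRing R] [AddCommGroup M] [Module R M]
    [AddCommGroup N] [Module R N] {n : ℕ} (hn : 1 ≤ n)
    (e : (M ⊗[R] N) ≃ₗ[R] (Fin n → R)) :
    Module.Finite R M ∧ Module.Projective R M := by
  classical
  set i0 : Fin n := ⟨0, hn⟩ with hi0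
  -- a functional `f` and an element `ξ` with `f ξ = 1`
  set f : (M ⊗[R] N) →ₗ[R] R := (LinearMap.proj i0).comp e.toLinearMap with hf
  set ξ : M ⊗[R] N := e.symm (Pi.single i0 1) with hξ
  have hfξ : f ξ = 1 := by
    simp [hf, hξ]
  -- `M` is a direct summand of `(M ⊗ N) ⊗ M`
  set σ : M →ₗ[R] (M ⊗[R] N) ⊗[R] M := TensorProduct.mk R (M ⊗[R] N) M ξ with hσ
  set ρ : (M ⊗[R] N) ⊗[R] M →ₗ[R] M :=
    TensorProduct.lift ((LinearMap.lsmul R M).comp f) with hρ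
  have hρσ : ∀ m : M, ρ (σ m) = m := by
    intro m
    simp [hρ, hσ, hfξ]
  -- a finitely generated submodule `M'` of `M` with `M' ⊗ N → M ⊗ N` surjective
  obtain ⟨M', hM'fin, hsub⟩ := TensorProduct.exists_finite_submodule_left_of_setFinite
      (R := R) (M := M) (N := N)
      (Set.range fun i : Fin n => e.symm (Pi.single i 1)) (Set.finite_range _)
  have hspan : Submodule.span R (Set.range fun i : Fin n => e.symm (Pi.single i 1)) = ⊤ := by
    have hb := ((Pi.basisFun R (Fin n)).map e.symm).span_eq
    have : Set.range (((Pi.basisFun R (Fin n)).map e.symm : Module.Basis (Fin n) R (M ⊗[R] N)))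
        = Set.range fun i : Fin n => e.symm (Pi.single i 1) := by
      ext x
      simp [Module.Basis.map_apply]
    rwa [this] at hb
  have hsurj : Function.Surjective (M'.subtype.rTensor N) := by
    rw [← LinearMap.range_eq_top, ← top_le_iff, ← hspan]
    exact Submodule.span_le.mpr hsub
  -- a surjection from a finite free module onto `M'`
  obtain ⟨k, v, hv⟩ := Module.Finite.exists_fin (R := R) (M := M')
  set p0 : (Fin k → R) →ₗ[R] M' := Fintype.linearCombination R v with hp0
  have hp0surj : Function.Surjective p0 := by
    rw [← LinearMap.range_eq_top, Fintype.range_linearCombination, hv]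
  set P : (Fin k → R) →ₗ[R] M := M'.subtype.comp p0 with hP
  have hPsurj : Function.Surjective (P.rTensor N) := by
    rw [hP, LinearMap.rTensor_comp]
    exact hsurj.comp (LinearMap.rTensor_surjective N hp0surj)
  -- split the surjection `(Fin k → R) ⊗ N → M ⊗ N`, since `M ⊗ N` is free
  obtain ⟨q, hq⟩ := Module.projective_lifting_property (P.rTensor N)
      (e.symm.toLinearMap) hPsurj
  set q' : (M ⊗[R] N) →ₗ[R] ((Fin k → R) ⊗[R] N) := q.comp e.toLinearMap with hq'
  have hq'comp : (P.rTensor N).comp q' = LinearMap.id := by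
    refine LinearMap.ext fun x => ?_
    have := LinearMap.congr_fun hq (e x)
    simpa [hq'] using this
  -- tensor the splitting with `M`
  set i1 : M →ₗ[R] ((Fin k → R) ⊗[R] N) ⊗[R] M := (q'.rTensor M).comp σ with hi1
  set r1 : ((Fin k → R) ⊗[R] N) ⊗[R] M →ₗ[R] M :=
    ρ.comp ((P.rTensor N).rTensor M) with hr1
  have hsplit : ∀ m : M, r1 (i1 m) = m := by
    intro m
    have : ((P.rTensor N).rTensor M) ((q'.rTensor M) (σ m)) = σ m := by
      rw [← LinearMap.comp_apply, ← LinearMap.rTensor_comp, hq'comp, LinearMap.rTensor_id,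
        LinearMap.id_apply]
    simp only [hi1, hr1, LinearMap.comp_apply, this]
    exact hρσ m
  -- identify `((Fin k → R) ⊗ N) ⊗ M` with a finite free module
  set φ : (((Fin k → R) ⊗[R] N) ⊗[R] M) ≃ₗ[R] ((Fin k → R) ⊗[R] (Fin n → R)) :=
    (TensorProduct.assoc R (Fin k → R) N M) ≪≫ₗ
      (TensorProduct.congr (LinearEquiv.refl R (Fin k → R))
        ((TensorProduct.comm R N M) ≪≫ₗ e)) with hφ
  set i' : M →ₗ[R] ((Fin k → R) ⊗[R] (Fin n → R)) := φ.toLinearMap.comp i1 with hi'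
  set r' : ((Fin k → R) ⊗[R] (Fin n → R)) →ₗ[R] M := r1.comp φ.symm.toLinearMap with hr'
  have hsplit' : r'.comp i' = LinearMap.id := by
    ext m
    simp only [hi', hr', LinearMap.comp_apply, LinearMap.id_apply,
      LinearEquiv.coe_coe, LinearEquiv.symm_apply_apply]
    exact hsplit m
  have hr'surj : Function.Surjective r' := fun m =>
    ⟨i' m, by rw [← LinearMap.comp_apply, hsplit', LinearMap.id_apply]⟩
  exact ⟨Module.Finite.of_surjective r' hr'surj, Module.Projective.of_split i' r' hsplit'⟩

theorem stmt_0 (R M N : Type*) [CommRing R] [AddCommGroup M] [Module R M]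
    [AddCommGroup N] [Module R N] (n : ℕ) (hn : 1 ≤ n)
    (e : (M ⊗[R] N) ≃ₗ[R] (Fin n → R)) :
    (Module.Finite R M ∧ Module.Projective R M) ∧
      (Module.Finite R N ∧ Module.Projective R N) :=
  ⟨stmt_0_aux hn e, stmt_0_aux hn ((TensorProduct.comm R N M) ≪≫ₗ e)⟩
end

section
/- The annihilator of a finitely generated projective module over a commutative ring is generated by an idempotent element. -/
theorem stmt_5 (R M : Type*) [CommRing R] [AddCommGroup M] [Module R M]
    [Module.Finite R M] [Module.Projective R M] :
    ∃ e : R, IsIdempotentElem e ∧ Module.annihilator R M = Ideal.span {e} := by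
  -- trace ideal
  set T : Set R := {r : R | ∃ (f : M →ₗ[R] R) (x : M), f x = r} with hT
  set I : Ideal R := Ideal.span T with hI
  -- annihilator kills trace ideal
  have hkill : ∀ a ∈ Module.annihilator R M, ∀ t ∈ I, a * t = 0 := by
    intro a ha t ht
    induction ht using Submodule.span_induction with
    | mem x hx =>
      obtain ⟨f, m, rfl⟩ := hx
      rw [← smul_eq_mul, ← f.map_smul, Module.mem_annihilator.mp ha m, f.map_zero]
    | zero => rw [mul_zero]
    | add x y _ _ hx hy => rw [mul_add, hx, hy, add_zero]
    | smul c x _ hx => rw [smul_eq_mul, mul_left_comm, hx, mul_zero]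
  -- M = I • M via dual basis
  obtain ⟨s, hs⟩ := Module.projective_def'.mp (inferInstance : Module.Projective R M)
  have hle : (⊤ : Submodule R M) ≤ I • ⊤ := by
    intro m _
    have hm : (Finsupp.linearCombination R (id : M → M)) (s m) = m := by
      exact congrArg (fun g => g m) hs ▸ rfl
    rw [← hm, Finsupp.linearCombination_apply]
    refine Submodule.sum_mem _ fun i _ => ?_
    refine Submodule.smul_mem_smul ?_ trivial
    exact Ideal.subset_span ⟨Finsupp.lapply i ∘ₗ s, m, rfl⟩
  obtain ⟨r, hr1, hr0⟩ :=
    Submodule.exists_sub_one_mem_and_smul_eq_zero_of_fg_of_le_smul I ⊤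
      (Module.Finite.fg_top) hle
  have hrann : r ∈ Module.annihilator R M :=
    Module.mem_annihilator.mpr fun m => hr0 m trivial
  refine ⟨r, ?_, le_antisymm ?_ ?_⟩
  · have := hkill r hrann (r - 1) hr1
    unfold IsIdempotentElem
    linear_combination this
  · intro a ha
    have := hkill a ha (r - 1) hr1
    have : a = a * r := by linear_combination -this
    rw [this]
    exact Ideal.mem_span_singleton.mpr ⟨a, mul_comm a r⟩
  · rw [Ideal.span_le, Set.singleton_subset_iff]
    exact hrann
end

section
/- Let M be a module over a commutative ring R. Then M is a finitely generated projective R-module of constant rank 1 if and only if the canonical R-module map M ⊗[R] Hom_R(M,R) → R given by x ⊗ φ ↦ φ(x) is an isomorphism. -/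
open TensorProduct

theorem evalBijective_of_equiv (A N : Type*) [CommRing A] [AddCommGroup N] [Module A N]
    (eq : N ≃ₗ[A] A) : Function.Bijective (contractRight A N) := by
  set v : N ⊗[A] Module.Dual A N := eq.symm 1 ⊗ₜ (eq : N →ₗ[A] A) with hv
  have key : ∀ (φ : Module.Dual A N), φ = φ (eq.symm 1) • (eq : N →ₗ[A] A) := by
    intro φ
    ext n
    have : n = eq n • eq.symm 1 := by
      rw [← map_smul, smul_eq_mul, mul_one, eq.symm_apply_apply]
    rw [this]
    simp [mul_comm]
  have hne : ∀ n : N, n = eq n • eq.symm 1 := by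
    intro n
    rw [← map_smul, smul_eq_mul, mul_one, eq.symm_apply_apply]
  have hinv : Function.RightInverse (fun r : A => r • v) (contractRight A N) := by
    intro r
    simp [hv, contractRight_apply]
  constructor
  · have h2 : ∀ t : N ⊗[A] Module.Dual A N, (contractRight A N t) • v = t := by
      intro t
      induction t with
      | zero => simp
      | add x y hx hy => simp [add_smul, hx, hy]
      | tmul n φ =>
        rw [contractRight_apply]
        have hφn : φ n = φ (eq.symm 1) * eq n := by
          conv_lhs => rw [key φ]
          simp [smul_eq_mul]
        calc (φ n) • v = (φ (eq.symm 1) * eq n) • v := by rw [hφn]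
          _ = φ (eq.symm 1) • (eq n • (eq.symm 1 ⊗ₜ[A] (eq : N →ₗ[A] A))) := by
              rw [smul_smul, hv]
          _ = φ (eq.symm 1) • ((eq n • eq.symm 1) ⊗ₜ[A] (eq : N →ₗ[A] A)) := by
              rw [smul_tmul']
          _ = φ (eq.symm 1) • (n ⊗ₜ[A] (eq : N →ₗ[A] A)) := by rw [← hne n]
          _ = n ⊗ₜ[A] (φ (eq.symm 1) • (eq : N →ₗ[A] A)) := by rw [tmul_smul]
          _ = n ⊗ₜ[A] φ := by rw [← key φ]
    intro x y hxy
    rw [← h2 x, ← h2 y, hxy]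
  · exact hinv.surjective
open TensorProduct

set_option synthInstance.maxHeartbeats 1000000 in
set_option maxHeartbeats 1000000 in
theorem finite_projective_of_evalBijective (R M : Type*) [CommRing R] [AddCommGroup M]
    [Module R M] (he : Function.Bijective (contractRight R M)) :
    Module.Finite R M ∧ Module.Projective R M := by
  classical
  let E : M ⊗[R] Module.Dual R M ≃ₗ[R] R := LinearEquiv.ofBijective _ he
  have hcl : Function.Bijective (contractLeft R M) := by
    have h : contractLeft R M =
        (contractRight R M) ∘ₗ (TensorProduct.comm R (Module.Dual R M) M).toLinearMap := by
      apply TensorProduct.ext'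
      intro φ m
      simp
    rw [h]
    exact he.comp (TensorProduct.comm R _ M).bijective
  let E' : Module.Dual R M ⊗[R] M ≃ₗ[R] R := LinearEquiv.ofBijective _ hcl
  let Φ : M ≃ₗ[R] (M ⊗[R] Module.Dual R M) ⊗[R] M :=
    (TensorProduct.lid R M).symm ≪≫ₗ (LinearEquiv.rTensor M E).symm
  let Ψ : (M ⊗[R] Module.Dual R M) ⊗[R] M ≃ₗ[R] M :=
    (TensorProduct.assoc R M (Module.Dual R M) M) ≪≫ₗ (LinearEquiv.lTensor M E')
      ≪≫ₗ (TensorProduct.rid R M)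
  let T : M ≃ₗ[R] M := Φ ≪≫ₗ Ψ
  set u : M ⊗[R] Module.Dual R M := E.symm 1 with hu
  obtain ⟨s, hs⟩ := TensorProduct.exists_finset u
  have hΦ : ∀ m : M, Φ m = u ⊗ₜ[R] m := by
    intro m
    have : (LinearEquiv.rTensor M E) (u ⊗ₜ[R] m) = (1 : R) ⊗ₜ[R] m := by
      simp [LinearEquiv.rTensor, hu]
    simp only [Φ, LinearEquiv.trans_apply]
    rw [LinearEquiv.symm_apply_eq, this]
    simp
  have hT : ∀ m : M, T m = ∑ p ∈ s, (p.2 m) • p.1 := by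
    intro m
    have : T m = Ψ (u ⊗ₜ[R] m) := by
      simp only [T, LinearEquiv.trans_apply, hΦ]
    rw [this, hs, TensorProduct.sum_tmul]
    rw [map_sum]
    refine Finset.sum_congr rfl fun p _ => ?_
    simp [Ψ, E', LinearEquiv.lTensor, TensorProduct.smul_tmul', contractLeft_apply]
  have key : ∀ m : M, m = ∑ p ∈ s, (p.2 m) • T.symm p.1 := by
    intro m
    conv_lhs => rw [← T.symm_apply_apply m, hT m]
    rw [map_sum]
    refine Finset.sum_congr rfl fun p _ => ?_
    rw [map_smul]
  let π : M →ₗ[R] (s → R) := LinearMap.pi (fun p => p.1.2)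
  let σ : (s → R) →ₗ[R] M :=
    ∑ p : s, (LinearMap.toSpanSingleton R M (T.symm p.1.1)).comp (LinearMap.proj p)
  have hσπ : σ.comp π = LinearMap.id := by
    ext m
    simp only [LinearMap.comp_apply, LinearMap.id_apply, σ, LinearMap.sum_apply,
      LinearMap.toSpanSingleton_apply, LinearMap.proj_apply, LinearMap.pi_apply, π]
    rw [Finset.sum_coe_sort s (fun p => (p.2 m) • T.symm p.1)]
    exact (key m).symm
  have hsurj : Function.Surjective σ := by
    intro m
    exact ⟨π m, by rw [← LinearMap.comp_apply, hσπ]; rfl⟩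
  exact ⟨Module.Finite.of_surjective σ hsurj, Module.Projective.of_split π σ hσπ⟩
open TensorProduct

section Bridge

variable (R : Type*) (M : Type*) [CommRing R] [AddCommGroup M] [Module R M] (S : Submonoid R)

/-- Localization map on duals. -/
noncomputable def locDual :
    Module.Dual R M →ₗ[R] Module.Dual (Localization S) (LocalizedModule S M) :=
  IsLocalizedModule.mapExtendScalars S (LocalizedModule.mkLinearMap S M)
    (Algebra.linearMap R (Localization S)) (Localization S)

instance locDual_isLocalizedModule [Module.FinitePresentation R M] :
    IsLocalizedModule S (locDual R M S) :=
  Module.FinitePresentation.isLocalizedModule_mapExtendScalars S _ _ (Localization S)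

@[simp] lemma locDual_apply (φ : Module.Dual R M) (m : M) :
    locDual R M S φ (LocalizedModule.mkLinearMap S M m) = algebraMap R (Localization S) (φ m) :=
  IsLocalizedModule.map_apply S (LocalizedModule.mkLinearMap S M)
    (Algebra.linearMap R (Localization S)) φ m

/-- Localization map on `M ⊗ M^*`. -/
noncomputable def locTensor :
    M ⊗[R] Module.Dual R M →ₗ[R]
      (LocalizedModule S M ⊗[Localization S]
        Module.Dual (Localization S) (LocalizedModule S M)) :=
  TensorProduct.lift <| LinearMap.mk₂ R
    (fun m φ => LocalizedModule.mkLinearMap S M m ⊗ₜ[Localization S] locDual R M S φ)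
    (fun m m' φ => by rw [map_add, TensorProduct.add_tmul])
    (fun r m φ => by rw [map_smul, TensorProduct.smul_tmul'])
    (fun m φ φ' => by rw [map_add, TensorProduct.tmul_add])
    (fun r m φ => by rw [map_smul, TensorProduct.tmul_smul])

@[simp] lemma locTensor_apply (m : M) (φ : Module.Dual R M) :
    locTensor R M S (m ⊗ₜ φ) =
      LocalizedModule.mkLinearMap S M m ⊗ₜ[Localization S] locDual R M S φ := rfl

instance locTensor_isLocalizedModule [Module.FinitePresentation R M] :
    IsLocalizedModule S (locTensor R M S) := by
  set A := Localization S
  let bM := IsLocalizedModule.isBaseChange S A (LocalizedModule.mkLinearMap S M)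
  let bD := IsLocalizedModule.isBaseChange S A (locDual R M S)
  let ψ : A ⊗[R] (M ⊗[R] Module.Dual R M) ≃ₗ[A]
      (LocalizedModule S M ⊗[A] Module.Dual A (LocalizedModule S M)) :=
    TensorProduct.AlgebraTensorModule.distribBaseChange R A M (Module.Dual R M) ≪≫ₗ
      TensorProduct.congr bM.equiv bD.equiv
  have hmk : IsLocalizedModule S (TensorProduct.mk R A (M ⊗[R] Module.Dual R M) 1) :=
    (isLocalizedModule_iff_isBaseChange S A _).mpr
      (TensorProduct.isBaseChange R (M ⊗[R] Module.Dual R M) A)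
  have heq : locTensor R M S = (ψ.restrictScalars R : _ →ₗ[R] _) ∘ₗ
      (TensorProduct.mk R A (M ⊗[R] Module.Dual R M) 1) := by
    apply TensorProduct.ext'
    intro m φ
    apply ψ.symm.injective
    simp only [LinearMap.comp_apply, LinearEquiv.coe_coe, LinearEquiv.restrictScalars_apply,
      LinearEquiv.symm_apply_apply, TensorProduct.mk_apply, locTensor_apply]
    simp only [ψ, LinearEquiv.trans_symm, LinearEquiv.trans_apply, TensorProduct.congr_symm_tmul,
      IsBaseChange.equiv_symm_apply]
    rw [TensorProduct.congr_symm_tmul, IsBaseChange.equiv_symm_apply, IsBaseChange.equiv_symm_apply]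
    simp [TensorProduct.AlgebraTensorModule.distribBaseChange]
  rw [heq]
  exact IsLocalizedModule.of_linearEquiv S _ _

end Bridge
open TensorProduct

theorem equiv_of_evalBijective (A N : Type*) [CommRing A] [IsLocalRing A] [AddCommGroup N]
    [Module A N] [Module.FinitePresentation A N] [Module.Flat A N]
    (he : Function.Bijective (contractRight A N)) : Nonempty (N ≃ₗ[A] A) := by
  classical
  haveI : Module.Free A N := Module.free_of_flat_of_isLocalRing
  let ι := Module.Free.ChooseBasisIndex A N
  let b : Module.Basis ι A N := Module.Free.chooseBasis A N
  haveI : Fintype ι := inferInstance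
  let bt : Module.Basis (ι × ι) A (N ⊗[A] Module.Dual A N) := Module.Basis.tensorProduct b b.dualBasis
  have h1 : Module.finrank A (N ⊗[A] Module.Dual A N) = Fintype.card ι * Fintype.card ι := by
    rw [Module.finrank_eq_card_basis bt, Fintype.card_prod]
  have h2 : Module.finrank A (N ⊗[A] Module.Dual A N) = 1 := by
    rw [(LinearEquiv.ofBijective (contractRight A N) he).finrank_eq]
    exact Module.finrank_self A
  have hcard : Fintype.card ι = 1 := by
    have := h1.symm.trans h2
    nlinarith [Fintype.card ι]
  haveI : Unique ι := Fintype.card_eq_one_iff_nonempty_unique.mp hcard |>.some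
  exact ⟨b.repr ≪≫ₗ Finsupp.LinearEquiv.finsuppUnique A A ι⟩

theorem locTensor_map_contractRight (R M : Type*) [CommRing R] [AddCommGroup M] [Module R M]
    (S : Submonoid R) [Module.FinitePresentation R M] :
    IsLocalizedModule.map S (locTensor R M S) (Algebra.linearMap R (Localization S))
        (contractRight R M) =
      (contractRight (Localization S) (LocalizedModule S M)).restrictScalars R := by
  apply IsLocalizedModule.ext S (locTensor R M S)
    (IsLocalizedModule.map_units (Algebra.linearMap R (Localization S)))
  rw [IsLocalizedModule.map_comp]
  apply TensorProduct.ext'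
  intro m φ
  simp only [LinearMap.comp_apply, contractRight_apply, locTensor_apply,
    LinearMap.coe_restrictScalars, Algebra.linearMap_apply]
  exact (locDual_apply R M S φ m).symm

theorem stmt_7 (R M : Type*) [CommRing R] [AddCommGroup M] [Module R M] :
    (Module.Finite R M ∧ Module.Projective R M ∧
      ∀ (p : Ideal R) (_ : p.IsPrime),
        Nonempty (LocalizedModule p.primeCompl M ≃ₗ[Localization.AtPrime p]
          Localization.AtPrime p)) ↔
    Function.Bijective (contractRight R M) := by
  constructor
  · rintro ⟨hfin, hproj, hloc⟩
    haveI : Module.FinitePresentation R M := Module.finitePresentation_of_projective R M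
    apply bijective_of_isLocalized_maximal
      (fun P _ => LocalizedModule P.primeCompl M ⊗[Localization.AtPrime P]
        Module.Dual (Localization.AtPrime P) (LocalizedModule P.primeCompl M))
      (fun P _ => locTensor R M P.primeCompl)
      (fun P _ => Localization.AtPrime P)
      (fun P _ => Algebra.linearMap R (Localization.AtPrime P))
      (contractRight R M)
    intro P hP
    rw [locTensor_map_contractRight]
    have eq : LocalizedModule P.primeCompl M ≃ₗ[Localization.AtPrime P]
        Localization.AtPrime P := (hloc P hP.isPrime).some
    simpa using evalBijective_of_equiv _ _ eq
  · intro he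
    obtain ⟨hfin, hproj⟩ := finite_projective_of_evalBijective R M he
    refine ⟨hfin, hproj, fun p hp => ?_⟩
    haveI := hfin; haveI := hproj; haveI := hp
    haveI : Module.FinitePresentation R M := Module.finitePresentation_of_projective R M
    haveI : Module.Projective (Localization.AtPrime p) (LocalizedModule p.primeCompl M) :=
      Module.projective_of_isLocalizedModule p.primeCompl
        (LocalizedModule.mkLinearMap p.primeCompl M)
    have hbij : Function.Bijective (IsLocalizedModule.map p.primeCompl
        (locTensor R M p.primeCompl) (Algebra.linearMap R (Localization.AtPrime p))
        (contractRight R M)) :=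
      ⟨IsLocalizedModule.map_injective _ _ _ _ he.1,
       IsLocalizedModule.map_surjective _ _ _ _ he.2⟩
    rw [locTensor_map_contractRight] at hbij
    exact equiv_of_evalBijective _ _ (by simpa using hbij)
end

section
/- Let M and N be modules over a commutative ring R such that M ⊗[R] N ≅ R as R-modules. Then N is isomorphic to the dual module Hom_R(M, R). -/
open TensorProduct

theorem stmt_8 (R M N : Type*) [CommRing R] [AddCommGroup M] [Module R M]
    [AddCommGroup N] [Module R N] (e : (M ⊗[R] N) ≃ₗ[R] R) :
    Nonempty (N ≃ₗ[R] (M →ₗ[R] R)) := by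
  classical
  set u : M ⊗[R] N := e.symm 1 with hu
  -- the pairing map
  set φ : N →ₗ[R] (M →ₗ[R] R) := (TensorProduct.curry (e : M ⊗[R] N →ₗ[R] R)).flip with hφ
  have hφ_apply : ∀ (n : N) (m : M), φ n m = e (m ⊗ₜ n) := by
    intro n m; simp [hφ]
  -- α : N ⊗ (M ⊗ N) ≃ N
  set α : (N ⊗[R] (M ⊗[R] N)) ≃ₗ[R] N :=
    (TensorProduct.congr (LinearEquiv.refl R N) e).trans (TensorProduct.rid R N) with hα
  have hα_apply : ∀ (n : N) (x : M ⊗[R] N), α (n ⊗ₜ x) = e x • n := by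
    intro n x; simp [hα]
  -- σ : swap the two outer N factors
  set σ : (N ⊗[R] (M ⊗[R] N)) ≃ₗ[R] (N ⊗[R] (M ⊗[R] N)) :=
    (TensorProduct.congr (LinearEquiv.refl R N) (TensorProduct.comm R M N)).trans
      ((TensorProduct.leftComm R N N M).trans
        (TensorProduct.congr (LinearEquiv.refl R N) (TensorProduct.comm R N M))) with hσ
  have hσ_apply : ∀ (n : N) (m : M) (n' : N), σ (n ⊗ₜ (m ⊗ₜ n')) = n' ⊗ₜ (m ⊗ₜ n) := by
    intro n m n'; simp [hσ]
  have hαsymm : ∀ n : N, α.symm n = n ⊗ₜ u := by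
    intro n
    rw [LinearEquiv.symm_apply_eq, hα_apply, hu, e.apply_symm_apply, one_smul]
  -- injectivity of φ
  have hinj : Function.Injective φ := by
    rw [← LinearMap.ker_eq_bot, LinearMap.ker_eq_bot']
    intro n hn
    have key : ∀ x : M ⊗[R] N, α (σ (n ⊗ₜ x)) = 0 := by
      intro x
      induction x using TensorProduct.induction_on with
      | zero => simp
      | tmul m n' =>
        rw [hσ_apply, hα_apply]
        have : e (m ⊗ₜ n) = 0 := by rw [← hφ_apply, hn]; rfl
        rw [this, zero_smul]
      | add x y hx hy =>
        rw [tmul_add, map_add, map_add, hx, hy, add_zero]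
    have h0 : α (σ (α.symm n)) = 0 := by rw [hαsymm]; exact key u
    have h1 : σ (α.symm n) = 0 := by
      have := α.injective (by rw [h0, map_zero] : α (σ (α.symm n)) = α 0)
      exact this
    have h2 : α.symm n = 0 := σ.injective (by rw [h1, map_zero])
    have := congrArg α h2
    rwa [α.apply_symm_apply, map_zero] at this
  -- β : (M ⊗ N) ⊗ M ≃ M
  set β : ((M ⊗[R] N) ⊗[R] M) ≃ₗ[R] M :=
    (TensorProduct.congr e (LinearEquiv.refl R M)).trans (TensorProduct.lid R M) with hβ
  have hβ_apply : ∀ (x : M ⊗[R] N) (m : M), β (x ⊗ₜ m) = e x • m := by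
    intro x m; simp [hβ]
  -- σ' : swap the two outer M factors
  set σ' : ((M ⊗[R] N) ⊗[R] M) ≃ₗ[R] ((M ⊗[R] N) ⊗[R] M) :=
    (TensorProduct.assoc R M N M).trans
      ((TensorProduct.leftComm R M N M).trans
        (((TensorProduct.congr (LinearEquiv.refl R N) (TensorProduct.comm R M M)).trans
          (TensorProduct.leftComm R N M M)).trans
            (TensorProduct.assoc R M N M).symm)) with hσ'
  have hσ'_apply : ∀ (m : M) (n : N) (m' : M),
      σ' ((m ⊗ₜ n) ⊗ₜ m') = (m' ⊗ₜ n) ⊗ₜ m := by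
    intro m n m'; simp [hσ']
  have hβsymm : ∀ m : M, β.symm m = u ⊗ₜ m := by
    intro m
    rw [LinearEquiv.symm_apply_eq, hβ_apply, hu, e.apply_symm_apply, one_smul]
  -- the automorphism Ψ of M
  set Ψ : M ≃ₗ[R] M := (β.symm.trans σ').trans β with hΨ
  have hΨ_apply : ∀ m : M, Ψ m = β (σ' (u ⊗ₜ m)) := by
    intro m; simp [hΨ, hβsymm]
  -- surjectivity of φ
  have hsurj : Function.Surjective φ := by
    intro g
    set f : M →ₗ[R] R := g ∘ₗ (Ψ.symm : M →ₗ[R] M) with hf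
    refine ⟨(TensorProduct.lid R N) (LinearMap.rTensor N f u), ?_⟩
    ext m
    rw [hφ_apply]
    have key : ∀ x : M ⊗[R] N,
        e (m ⊗ₜ ((TensorProduct.lid R N) (LinearMap.rTensor N f x))) =
          f (β (σ' (x ⊗ₜ m))) := by
      intro x
      induction x using TensorProduct.induction_on with
      | zero => simp
      | tmul m₀ n₀ =>
        rw [LinearMap.rTensor_tmul, hσ'_apply, hβ_apply]
        simp [tmul_smul, smul_eq_mul, mul_comm]
      | add x y hx hy =>
        rw [map_add, map_add, tmul_add, map_add, hx, hy, add_tmul, map_add, map_add, map_add]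
    rw [key u, ← hΨ_apply, hf]
    simp
  exact ⟨LinearEquiv.ofBijective φ ⟨hinj, hsurj⟩⟩
end

section
/- Let R be a commutative ring and M an R-module such that for every prime ideal p there exists f ∈ R \ p with the localization M_f a finitely generated R_f-module. Then M is a finitely generated R-module. -/
theorem stmt_9 (R M : Type*) [CommRing R] [AddCommGroup M] [Module R M]
    (h : ∀ (p : Ideal R) (_ : p.IsPrime), ∃ f : R, f ∉ p ∧
      Module.Finite (Localization.Away f) (LocalizedModule (Submonoid.powers f) M)) :
    Module.Finite R M := by
  set t : Set R := {f | Module.Finite (Localization.Away f)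
    (LocalizedModule (Submonoid.powers f) M)} with ht
  have hspan : Ideal.span t = ⊤ := by
    by_contra hne
    obtain ⟨m, hm, hle⟩ := Ideal.exists_le_maximal _ hne
    obtain ⟨f, hf, hfin⟩ := h m hm.isPrime
    exact hf (hle (Ideal.subset_span hfin))
  exact Module.Finite.of_localizationSpan t hspan (fun g ↦ g.property)
end

section
/- Let R be a commutative ring, T(R) its total ring of fractions, and let I and J be R-submodules of T(R) with at least one of them flat as an R-module. Then the canonical R-module map I ⊗[R] J → I·J sending x ⊗ y to xy is an isomorphism. -/
open TensorProduct

theorem stmt_10 (R : Type*) [CommRing R]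
    (I J : Submodule R (FractionRing R))
    (hflat : Module.Flat R I ∨ Module.Flat R J) :
    Function.Bijective (Submodule.mulMap' I J) := by
  have hK : Module.Flat R (FractionRing R) :=
    IsLocalization.flat _ (nonZeroDivisors R)
  have hincl : Function.Injective (TensorProduct.mapIncl I J) := by
    rcases hflat with h | h
    · rw [TensorProduct.mapIncl, ← LinearMap.rTensor_comp_lTensor, LinearMap.coe_comp]
      exact Function.Injective.comp
        (Module.Flat.rTensor_preserves_injective_linearMap _ I.injective_subtype)
        (Module.Flat.lTensor_preserves_injective_linearMap _ J.injective_subtype)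
    · rw [TensorProduct.mapIncl, ← LinearMap.lTensor_comp_rTensor, LinearMap.coe_comp]
      exact Function.Injective.comp
        (Module.Flat.lTensor_preserves_injective_linearMap _ J.injective_subtype)
        (Module.Flat.rTensor_preserves_injective_linearMap _ I.injective_subtype)
  have hmul : Function.Injective (Submodule.mulMap I J) := by
    rw [Submodule.mulMap_eq_mul'_comp_mapIncl, LinearMap.coe_comp]
    exact Function.Injective.comp
      (IsLocalization.bijective_linearMap_mul' (nonZeroDivisors R) (FractionRing R)).injective
      hincl
  refine ⟨fun x y h => hmul ?_, Submodule.mulMap'_surjective I J⟩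
  have : ∀ z, (Submodule.mulMap' I J z : FractionRing R) = Submodule.mulMap I J z :=
    fun z => rfl
  rw [← this, ← this, h]
end

section
/- Let I be a fractional ideal of a commutative ring R. If I is a projective R-module and contains a non-zerodivisor of R, then I is an invertible fractional ideal of R. -/
theorem stmt_13 (R : Type*) [CommRing R]
    (I : FractionalIdeal (nonZeroDivisors R) (FractionRing R))
    (hproj : Module.Projective R I)
    (hnzd : ∃ a : R, a ∈ nonZeroDivisors R ∧ algebraMap R (FractionRing R) a ∈ I) :
    ∃ J : FractionalIdeal (nonZeroDivisors R) (FractionRing R), I * J = 1 := by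
  classical
  set K := FractionRing R
  obtain ⟨a, haR, haI⟩ := hnzd
  obtain ⟨s, hs⟩ := hproj.out
  set aa : (I : Submodule R K) := ⟨algebraMap R K a, haI⟩ with haa
  set c : (I : Submodule R K) →₀ R := s aa with hc
  have aunit : IsUnit (algebraMap R K a) :=
    IsLocalization.map_units K (⟨a, haR⟩ : nonZeroDivisors R)
  -- key symmetry lemma
  have key : ∀ (f : (I : Submodule R K) →ₗ[R] R) (x y : (I : Submodule R K)),
      (x : K) * algebraMap R K (f y) = (y : K) * algebraMap R K (f x) := by
    intro f x y
    obtain ⟨d, hdS, hd⟩ := I.isFractional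
    obtain ⟨rx, hrx⟩ := hd x x.2
    obtain ⟨ry, hry⟩ := hd y y.2
    have hxy : (rx • y : (I : Submodule R K)) = (ry • x : (I : Submodule R K)) := by
      apply Subtype.ext
      rw [SetLike.val_smul, SetLike.val_smul, Algebra.smul_def, Algebra.smul_def,
        hrx, hry, Algebra.smul_def, Algebra.smul_def]
      ring
    have hfR : rx * f y = ry * f x := by
      have h := congrArg f hxy
      rw [map_smul, map_smul, smul_eq_mul, smul_eq_mul] at h
      exact h
    have dunit : IsUnit (algebraMap R K d) :=
      IsLocalization.map_units K (⟨d, hdS⟩ : nonZeroDivisors R)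
    apply dunit.mul_left_cancel
    calc algebraMap R K d * ((x : K) * algebraMap R K (f y))
        = (algebraMap R K d * x) * algebraMap R K (f y) := by ring
      _ = algebraMap R K rx * algebraMap R K (f y) := by
          rw [hrx, Algebra.smul_def]
      _ = algebraMap R K (rx * f y) := by rw [map_mul]
      _ = algebraMap R K (ry * f x) := by rw [hfR]
      _ = algebraMap R K ry * algebraMap R K (f x) := by rw [map_mul]
      _ = (algebraMap R K d * y) * algebraMap R K (f x) := by
          rw [hry, Algebra.smul_def]
      _ = algebraMap R K d * ((y : K) * algebraMap R K (f x)) := by ring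
  -- coordinate functionals
  set F : ↥(I : Submodule R K) → ((I : Submodule R K) →ₗ[R] R) :=
    fun y => { toFun := fun x => s x y,
               map_add' := fun u v => by simp,
               map_smul' := fun r u => by simp } with hF
  have hFaa : ∀ y : (I : Submodule R K), F y aa = c y := fun y => rfl
  -- the candidate inverse generators
  set q : ↥(I : Submodule R K) → K :=
    fun y => IsLocalization.mk' K (c y) (⟨a, haR⟩ : nonZeroDivisors R) with hqdef
  have haq : ∀ y, algebraMap R K a * q y = algebraMap R K (c y) := fun y =>
    IsLocalization.mk'_spec' K (c y) (⟨a, haR⟩ : nonZeroDivisors R)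
  have hq : ∀ (y x : (I : Submodule R K)), q y * (x : K) = algebraMap R K (F y x) := by
    intro y x
    apply aunit.mul_left_cancel
    calc algebraMap R K a * (q y * x)
        = (algebraMap R K a * q y) * x := by ring
      _ = algebraMap R K (c y) * x := by rw [haq]
      _ = (x : K) * algebraMap R K (F y aa) := by rw [hFaa]; ring
      _ = (aa : K) * algebraMap R K (F y x) := key (F y) x aa
      _ = algebraMap R K a * algebraMap R K (F y x) := rfl
  -- build J
  set J₀ : Submodule R K := Submodule.span R (Set.range q) with hJ₀
  have hJfrac : IsFractional (nonZeroDivisors R) J₀ := by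
    refine ⟨a, haR, fun b hb => ?_⟩
    induction hb using Submodule.span_induction with
    | mem x hx =>
        obtain ⟨y, rfl⟩ := hx
        exact ⟨c y, by rw [Algebra.smul_def, haq]⟩
    | zero => exact ⟨0, by simp⟩
    | add x y _ _ hx hy =>
        obtain ⟨u, hu⟩ := hx; obtain ⟨v, hv⟩ := hy
        exact ⟨u + v, by rw [map_add, hu, hv, smul_add]⟩
    | smul r x _ hx =>
        obtain ⟨u, hu⟩ := hx
        exact ⟨r * u, by rw [map_mul, ← Algebra.smul_def, hu, smul_comm]⟩
  refine ⟨⟨J₀, hJfrac⟩, le_antisymm ?_ ?_⟩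
  · refine FractionalIdeal.mul_le.mpr ?_
    intro i hi j hj
    have hj' : j ∈ J₀ := hj
    clear hj
    show i * j ∈ ((1 : FractionalIdeal (nonZeroDivisors R) K) : Submodule R K)
    induction hj' using Submodule.span_induction with
    | mem x hx =>
        obtain ⟨y, rfl⟩ := hx
        rw [mul_comm, hq y ⟨i, hi⟩]
        exact FractionalIdeal.coe_mem_one _ _
    | zero => simp
    | add x y _ _ hx hy => simpa [mul_add] using add_mem hx hy
    | smul r x _ hx => simpa [Algebra.smul_def, mul_left_comm] using
        Submodule.smul_mem _ r hx
  · rw [FractionalIdeal.one_le]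
    have h1 : (Finsupp.linearCombination R id) c = aa := hs aa
    have hsum : (algebraMap R K) a = ∑ y ∈ c.support, algebraMap R K (c y) * (y : K) := by
      conv_lhs => rw [show algebraMap R K a = (aa : K) from rfl, ← h1]
      rw [Finsupp.linearCombination_apply, Finsupp.sum, AddSubmonoidClass.coe_finset_sum]
      exact Finset.sum_congr rfl fun y _ => by
        rw [SetLike.val_smul, Algebra.smul_def]; rfl
    have hone : (1 : K) = ∑ y ∈ c.support, (y : K) * q y := by
      apply aunit.mul_left_cancel
      rw [mul_one, Finset.mul_sum]
      conv_lhs => rw [hsum]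
      exact Finset.sum_congr rfl fun y _ => by rw [← haq y]; ring
    rw [hone]
    refine Submodule.sum_mem _ fun y _ => ?_
    exact FractionalIdeal.mul_mem_mul y.2 (Submodule.subset_span ⟨y, rfl⟩)
end

section
/- Every finitely generated flat module of constant rank over a commutative semi-local ring is free. -/
open Submodule

section StmtAux
variable {R M : Type*} [CommRing R] [AddCommGroup M] [Module R M]

/-- If the images of `y` span the localization at a maximal ideal `P`, then
`span y ⊔ P • ⊤ = ⊤`. -/
lemma stmt14_span_sup (P : Ideal R) (hP : P.IsMaximal) (y : Set M)
    (h : span (Localization.AtPrime P)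
      (LocalizedModule.mkLinearMap P.primeCompl M '' y) = ⊤) :
    span R y ⊔ P • (⊤ : Submodule R M) = ⊤ := by
  rw [eq_top_iff]
  rintro m -
  have hm : LocalizedModule.mkLinearMap P.primeCompl M m ∈
      (span R y).localized' (Localization.AtPrime P) P.primeCompl
        (LocalizedModule.mkLinearMap P.primeCompl M) := by
    rw [Submodule.localized'_span, h]; trivial
  obtain ⟨a, ha, s, hs⟩ := hm
  rw [← IsLocalizedModule.mk_eq_mk'] at hs
  have h1 : LocalizedModule.mkLinearMap P.primeCompl M m = LocalizedModule.mk m 1 := rfl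
  rw [h1] at hs
  obtain ⟨u, hu⟩ := LocalizedModule.mk_eq.mp hs
  -- hu : u • (1 : P.primeCompl) • a = u • s • m
  have hv : ((u : R) * (s : R)) • m ∈ span R y := by
    have : ((u : R) * (s : R)) • m = u • s • m := by
      rw [Submonoid.smul_def, Submonoid.smul_def, smul_smul]
    rw [this, ← hu, one_smul, Submonoid.smul_def]
    exact smul_mem _ _ ha
  have hvP : (u : R) * (s : R) ∉ P := (u * s).2
  obtain ⟨w, i, hiP, hwi⟩ := hP.exists_inv hvP
  have hm' : m = w • (((u : R) * (s : R)) • m) + i • m := by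
    rw [smul_smul, ← add_smul, hwi, one_smul]
  rw [hm']
  exact add_mem (mem_sup_left (smul_mem _ _ hv))
    (mem_sup_right (smul_mem_smul hiP trivial))


lemma stmt14_span_top (P : Ideal R) (hP : P.IsMaximal) [Module.Finite R M] (y : Set M)
    (h : span R y ⊔ P • (⊤ : Submodule R M) = ⊤) :
    span (Localization.AtPrime P)
      (LocalizedModule.mkLinearMap P.primeCompl M '' y) = ⊤ := by
  haveI := hP
  haveI : P.IsPrime := hP.isPrime
  set Rₚ := Localization.AtPrime P
  set Mₚ := LocalizedModule P.primeCompl M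
  set mkl := LocalizedModule.mkLinearMap P.primeCompl M with hmkl
  haveI finM : Module.Finite Rₚ Mₚ :=
    Module.Finite.of_isLocalizedModule P.primeCompl mkl
  set N : Submodule Rₚ Mₚ := span Rₚ (mkl '' y) with hN
  set I : Ideal Rₚ := P.map (algebraMap R Rₚ) with hI
  have hm : ∀ m : M, mkl m ∈ N ⊔ I • (⊤ : Submodule Rₚ Mₚ) := by
    intro m
    have hmem : m ∈ span R y ⊔ P • (⊤ : Submodule R M) := by rw [h]; trivial
    have hle : span R y ⊔ P • (⊤ : Submodule R M) ≤
        ((N ⊔ I • ⊤).restrictScalars R).comap mkl := by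
      apply sup_le
      · rw [span_le]
        intro a ha
        exact mem_sup_left (subset_span (Set.mem_image_of_mem _ ha))
      · rw [smul_le]
        intro r hr n _
        simp only [mem_comap, restrictScalars_mem]
        have : mkl (r • n) = algebraMap R Rₚ r • mkl n := by
          rw [map_smul, algebraMap_smul]
        rw [this]
        exact mem_sup_right (smul_mem_smul (Ideal.mem_map_of_mem _ hr) trivial)
    exact hle hmem
  have key : (⊤ : Submodule Rₚ Mₚ) ≤ N ⊔ I • ⊤ := by
    rintro z -
    obtain ⟨⟨m, s⟩, rfl⟩ := IsLocalizedModule.mk'_surjective P.primeCompl mkl z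
    have : IsLocalizedModule.mk' mkl m s
        = IsLocalization.mk' Rₚ (1 : R) s • mkl m := by
      rw [← IsLocalizedModule.mk'_one P.primeCompl mkl m,
        IsLocalizedModule.mk'_smul_mk', one_smul, mul_one]
    show IsLocalizedModule.mk' mkl m s ∈ _
    rw [this]
    exact Submodule.smul_mem _ _ (hm m)
  have hIj : I ≤ Ideal.jacobson ⊥ := by
    rw [IsLocalRing.jacobson_eq_maximalIdeal (⊥ : Ideal Rₚ) bot_ne_top, hI,
      Localization.AtPrime.map_eq_maximalIdeal]
  have := Submodule.sup_eq_sup_smul_of_le_smul_of_le_jacobson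
    (I := I) (J := ⊥) (N := N) (N' := ⊤) (Module.finite_def.mp finM) hIj key
  simpa [eq_comm] using this.symm

lemma stmt14_exists_y (P : Ideal R) (hP : P.IsPrime) (d : ℕ)
    (e : LocalizedModule P.primeCompl M ≃ₗ[Localization.AtPrime P]
      (Fin d → Localization.AtPrime P)) :
    ∃ y : Fin d → M, span (Localization.AtPrime P)
      (LocalizedModule.mkLinearMap P.primeCompl M '' Set.range y) = ⊤ := by
  haveI := hP
  set Rₚ := Localization.AtPrime P
  set mkl := LocalizedModule.mkLinearMap P.primeCompl M with hmkl
  have hrep : ∀ i : Fin d, ∃ (m : M) (s : P.primeCompl),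
      LocalizedModule.mk m s = e.symm (Pi.single i 1) := by
    intro i
    exact LocalizedModule.induction_on (fun m s => ⟨m, s, rfl⟩) (e.symm (Pi.single i 1))
  choose y s hy using hrep
  refine ⟨y, ?_⟩
  rw [eq_top_iff]
  rintro z -
  have hsingle : e z = ∑ i, e z i • Pi.single i (1 : Rₚ) := by
    ext j
    rw [Finset.sum_apply]
    simp [Pi.single_apply, mul_comm]
  have hz : z = ∑ i, e z i • e.symm (Pi.single i 1) := by
    conv_lhs => rw [← e.symm_apply_apply z]
    conv_lhs => rw [hsingle]
    rw [map_sum]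
    simp only [map_smul]
  rw [hz]
  refine sum_mem fun i _ => Submodule.smul_mem _ _ ?_
  rw [← hy i]
  have : LocalizedModule.mk (y i) (s i)
      = IsLocalization.mk' Rₚ (1 : R) (s i) • mkl (y i) := by
    rw [IsLocalizedModule.mk_eq_mk', ← IsLocalizedModule.mk'_one P.primeCompl mkl (y i),
      IsLocalizedModule.mk'_smul_mk', one_smul, mul_one]
  rw [this]
  exact Submodule.smul_mem _ _ (subset_span (Set.mem_image_of_mem _ (Set.mem_range_self i)))

lemma stmt14_bij (P : Ideal R) (hP : P.IsMaximal) [Module.Finite R M] (d : ℕ)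
    (e : LocalizedModule P.primeCompl M ≃ₗ[Localization.AtPrime P]
      (Fin d → Localization.AtPrime P))
    (x : Fin d → M)
    (hx : span R (Set.range x) ⊔ P • (⊤ : Submodule R M) = ⊤) :
    Function.Bijective (LocalizedModule.map P.primeCompl
      (Fintype.linearCombination R x)) := by
  haveI := hP
  haveI : P.IsPrime := hP.isPrime
  set Rₚ := Localization.AtPrime P
  set mkl := LocalizedModule.mkLinearMap P.primeCompl M with hmkl
  set f := Fintype.linearCombination R x with hf
  set F := LocalizedModule.map P.primeCompl f with hF
  have hxtop := stmt14_span_top P hP _ hx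
  have hsurj : Function.Surjective F := by
    have hle : span Rₚ (mkl '' Set.range x) ≤ LinearMap.range F := by
      rw [span_le]
      rintro _ ⟨_, ⟨i, rfl⟩, rfl⟩
      refine ⟨LocalizedModule.mk (Pi.single i 1) 1, ?_⟩
      rw [hF, LocalizedModule.map_mk]
      simp [hf, hmkl, LocalizedModule.mkLinearMap_apply]
    rw [← LinearMap.range_eq_top]
    exact top_unique (hxtop ▸ hle)
  set L := LocalizedModule P.primeCompl (Fin d → R)
  haveI : Module.Finite Rₚ L := Module.Finite.of_isLocalizedModule P.primeCompl
    (LocalizedModule.mkLinearMap P.primeCompl (Fin d → R))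
  haveI : Module.Free Rₚ L := Module.free_of_isLocalizedModule P.primeCompl
    (LocalizedModule.mkLinearMap P.primeCompl (Fin d → R))
  haveI : Nontrivial R := by
    by_contra h
    rw [not_nontrivial_iff_subsingleton] at h
    exact hP.ne_top (Subsingleton.elim _ _)
  have hcard : Fintype.card (Module.Free.ChooseBasisIndex Rₚ L) = d := by
    rw [← Module.finrank_eq_card_chooseBasisIndex,
      Module.finrank_of_isLocalizedModule_of_free Rₚ P.primeCompl
        (LocalizedModule.mkLinearMap P.primeCompl (Fin d → R)),
      Module.finrank_fin_fun]
  let φ : L ≃ₗ[Rₚ] (Fin d → Rₚ) :=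
    ((Module.Free.chooseBasis Rₚ L).reindex (Fintype.equivFinOfCardEq hcard)).equivFun
  set g : (Fin d → Rₚ) →ₗ[Rₚ] (Fin d → Rₚ) :=
    (e : _ →ₗ[Rₚ] _) ∘ₗ F ∘ₗ (φ.symm : _ →ₗ[Rₚ] _) with hg
  have hgsurj : Function.Surjective g := by
    simp only [hg, LinearMap.coe_comp, LinearEquiv.coe_coe]
    exact e.surjective.comp (hsurj.comp φ.symm.surjective)
  have hginj := OrzechProperty.injective_of_surjective_endomorphism g hgsurj
  have hFinj : Function.Injective F := by
    intro a b hab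
    have h1 : g (φ a) = g (φ b) := by
      simp [hg, φ.symm_apply_apply, hab]
    exact φ.injective (hginj h1)
  exact ⟨hFinj, hsurj⟩

end StmtAux

theorem stmt_14 (R M : Type*) [CommRing R] [AddCommGroup M] [Module R M]
    (hsl : {m : Ideal R | m.IsMaximal}.Finite)
    [Module.Finite R M] [Module.Flat R M] (d : ℕ)
    (hrank : ∀ (p : Ideal R) (_ : p.IsPrime),
      Nonempty (LocalizedModule p.primeCompl M ≃ₗ[Localization.AtPrime p]
        (Fin d → Localization.AtPrime p))) :
    Nonempty (M ≃ₗ[R] (Fin d → R)) := by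
  classical
  have lemA : ∀ P : Ideal R, ∃ y : Fin d → M, P.IsMaximal →
      span R (Set.range y) ⊔ P • (⊤ : Submodule R M) = ⊤ := by
    intro P
    by_cases hP : P.IsMaximal
    · obtain ⟨e⟩ := hrank P hP.isPrime
      obtain ⟨y, hy⟩ := stmt14_exists_y P hP.isPrime d e
      exact ⟨y, fun _ => stmt14_span_sup P hP _ hy⟩
    · exact ⟨0, fun h => absurd h hP⟩
  choose y hy using lemA
  set T : Finset (Ideal R) := hsl.toFinset with hT
  have lemE : ∀ P : Ideal R, ∃ c : R, P.IsMaximal →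
      (c - 1 ∈ P ∧ ∀ Q : Ideal R, Q.IsMaximal → Q ≠ P → c ∈ Q) := by
    intro P
    by_cases hP : P.IsMaximal
    · set I : Ideal R := (T.erase P).inf id with hI
      have hPI : P ⊔ I = ⊤ := by
        by_contra hne
        have hle : P ⊔ I ≤ P := by
          rcases lt_or_eq_of_le (le_sup_left : P ≤ P ⊔ I) with hlt | heq
          · exact absurd (hP.1.2 _ hlt) hne
          · exact heq.ge
        have hIP : I ≤ P := le_trans le_sup_right hle
        obtain ⟨Q, hQT, hQP⟩ := (hP.isPrime.inf_le' (s := T.erase P) (f := id)).mp hIP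
        obtain ⟨hQne, hQT'⟩ := Finset.mem_erase.mp hQT
        have hQmax : Q.IsMaximal := hsl.mem_toFinset.mp hQT'
        exact hQne (hQmax.eq_of_le hP.ne_top hQP)
      have h1 : (1 : R) ∈ P ⊔ I := by rw [hPI]; trivial
      obtain ⟨p, hp, i, hi, hpi⟩ := Submodule.mem_sup.mp h1
      refine ⟨i, fun _ => ⟨?_, ?_⟩⟩
      · have : i - 1 = -p := by rw [← hpi]; ring
        rw [this]
        exact neg_mem hp
      · intro Q hQ hQP
        have hQ' : Q ∈ T.erase P :=
          Finset.mem_erase.mpr ⟨hQP, hsl.mem_toFinset.mpr hQ⟩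
        exact (Finset.inf_le hQ' : I ≤ id Q) hi
    · exact ⟨0, fun h => absurd h hP⟩
  choose c hc using lemE
  set x : Fin d → M := fun j => ∑ P ∈ T, c P • y P j with hx
  have key : ∀ P : Ideal R, P.IsMaximal →
      span R (Set.range x) ⊔ P • (⊤ : Submodule R M) = ⊤ := by
    intro P hP
    have hPT : P ∈ T := hsl.mem_toFinset.mpr hP
    have hdiff : ∀ j, x j - y P j ∈ P • (⊤ : Submodule R M) := by
      intro j
      have hsplit : x j = c P • y P j + ∑ Q ∈ T.erase P, c Q • y Q j := by
        rw [hx]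
        exact (Finset.add_sum_erase _ _ hPT).symm
      have : x j - y P j = (c P - 1) • y P j + ∑ Q ∈ T.erase P, c Q • y Q j := by
        rw [hsplit, sub_smul, one_smul]
        abel
      rw [this]
      refine add_mem (smul_mem_smul ((hc P hP).1) trivial) (sum_mem fun Q hQ => ?_)
      obtain ⟨hQne, hQT⟩ := Finset.mem_erase.mp hQ
      have hQmax : Q.IsMaximal := hsl.mem_toFinset.mp hQT
      exact smul_mem_smul ((hc Q hQmax).2 P hP (fun h => hQne h.symm)) trivial
    have hle : span R (Set.range (y P)) ≤ span R (Set.range x) ⊔ P • ⊤ := by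
      rw [span_le]
      rintro _ ⟨j, rfl⟩
      have : y P j = x j - (x j - y P j) := by abel
      rw [this]
      exact sub_mem (mem_sup_left (subset_span ⟨j, rfl⟩)) (mem_sup_right (hdiff j))
    apply le_antisymm le_top
    calc (⊤ : Submodule R M) = span R (Set.range (y P)) ⊔ P • ⊤ := (hy P hP).symm
      _ ≤ (span R (Set.range x) ⊔ P • ⊤) ⊔ P • ⊤ := sup_le_sup_right hle _
      _ = span R (Set.range x) ⊔ P • ⊤ := by rw [sup_assoc, sup_idem]
  have hbij : Function.Bijective (Fintype.linearCombination R x) := by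
    apply bijective_of_localized_maximal
    intro P hP
    obtain ⟨e⟩ := hrank P hP.isPrime
    exact stmt14_bij P hP d e x (key P hP)
  exact ⟨(LinearEquiv.ofBijective _ hbij).symm⟩
end

section
/- Every invertible fractional ideal of a commutative semi-local ring is principal, generated by a unit of the total ring of fractions. -/
open Submodule Pointwise

open scoped nonZeroDivisors

lemma fg_of_mul_eq_one' {R A : Type*} [CommRing R] [CommRing A] [Algebra R A]
    (I J : Submodule R A) (hinv : I * J = 1) : I.FG := by
  have h1 : (1 : A) ∈ I * J := by rw [hinv]; exact Submodule.one_le.mp le_rfl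
  obtain ⟨T, T', hT, hT', hmem⟩ := Submodule.mem_span_mul_finite_of_mem_mul h1
  refine ⟨T, le_antisymm (Submodule.span_le.2 hT) ?_⟩
  rw [← Submodule.span_mul_span] at hmem
  calc I = I * 1 := (mul_one I).symm
    _ ≤ I * (span R (T : Set A) * span R (T' : Set A)) :=
        _root_.mul_le_mul_right (Submodule.one_le.mpr hmem) _
    _ = span R (T : Set A) * (I * span R (T' : Set A)) := by ring
    _ ≤ span R (T : Set A) * (I * J) :=
        _root_.mul_le_mul_right (_root_.mul_le_mul_right (Submodule.span_le.2 hT') _) _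
    _ = span R (T : Set A) := by rw [hinv, mul_one]

theorem stmt_16 (R : Type*) [CommRing R]
    (hsl : {m : Ideal R | m.IsMaximal}.Finite)
    (I J : Submodule R (FractionRing R)) (hinv : I * J = 1) :
    ∃ x : FractionRing R, IsUnit x ∧ I = Submodule.span R {x} := by
  have hIfrac : IsFractional R⁰ I := FractionalIdeal.isFractional_of_fg (fg_of_mul_eq_one' I J hinv)
  have hJfrac : IsFractional R⁰ J :=
    FractionalIdeal.isFractional_of_fg (fg_of_mul_eq_one' J I (by rwa [mul_comm] at hinv))
  set I' : FractionalIdeal R⁰ (FractionRing R) := ⟨I, hIfrac⟩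
  set J' : FractionalIdeal R⁰ (FractionRing R) := ⟨J, hJfrac⟩
  have hinv' : I' * J' = 1 := by
    apply FractionalIdeal.coeToSubmodule_injective
    simp only [FractionalIdeal.coe_mul, FractionalIdeal.coe_one]; exact hinv
  obtain ⟨x, hx⟩ :=
    FractionalIdeal.isPrincipal.of_finite_maximals_of_inv le_rfl hsl I' J' hinv'
  refine ⟨x, ?_, hx⟩
  have h1 : (1 : FractionRing R) ∈ span R {x} * J := by
    rw [← hx]
    show (1 : FractionRing R) ∈ I * J
    rw [hinv]; exact Submodule.one_le.mp le_rfl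
  obtain ⟨z, hz, hxz⟩ := Submodule.mem_span_singleton_mul.1 h1
  exact IsUnit.of_mul_eq_one z hxz
end

section
/- Let e and e' be idempotents of a commutative ring R. Then there is an isomorphism of R-modules Re ⊕ Re' ≅ Re/Re(1−e') ⊕ Re'/Re'(1−e) ⊕ R(e + e' − 2ee'). -/
section Aux

variable {R : Type*} [CommRing R]

/-- For orthogonal idempotents `a b`, `span {a+b} ≃ span {a} × span {b}`. -/
noncomputable def splitEquiv (a b : R) (ha : a * a = a) (hb : b * b = b)
    (hab : a * b = 0) :
    (↥(Ideal.span ({a + b} : Set R)) ≃ₗ[R]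
      ↥(Ideal.span ({a} : Set R)) × ↥(Ideal.span ({b} : Set R))) where
  toFun x := (⟨x * a, Ideal.mul_mem_left _ _ (Ideal.mem_span_singleton_self a)⟩,
              ⟨x * b, Ideal.mul_mem_left _ _ (Ideal.mem_span_singleton_self b)⟩)
  map_add' x y := by
    ext <;> simp [add_mul]
  map_smul' r x := by
    ext <;> simp [mul_assoc]
  invFun p := ⟨(p.1 : R) + (p.2 : R), by
    obtain ⟨r, hr⟩ := Ideal.mem_span_singleton'.mp p.1.2
    obtain ⟨s, hs⟩ := Ideal.mem_span_singleton'.mp p.2.2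
    refine Ideal.mem_span_singleton'.mpr ⟨(p.1 : R) + (p.2 : R), ?_⟩
    rw [← hr, ← hs]
    linear_combination r * ha + s * hb + (r + s) * hab⟩
  left_inv x := by
    obtain ⟨r, hr⟩ := Ideal.mem_span_singleton'.mp x.2
    ext
    show (x : R) * a + (x : R) * b = x
    rw [← hr]
    linear_combination r * ha + r * hb + 2 * r * hab
  right_inv p := by
    obtain ⟨r, hr⟩ := Ideal.mem_span_singleton'.mp p.1.2
    obtain ⟨s, hs⟩ := Ideal.mem_span_singleton'.mp p.2.2
    ext
    · show ((p.1 : R) + (p.2 : R)) * a = (p.1 : R)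
      rw [← hr, ← hs]
      linear_combination r * ha + s * hab
    · show ((p.1 : R) + (p.2 : R)) * b = (p.2 : R)
      rw [← hr, ← hs]
      linear_combination s * hb + r * hab

/-- The natural map `span {e} → span {e * e'}`, `x ↦ x * e'`. -/
noncomputable def toPart (e e' : R) : ↥(Ideal.span ({e} : Set R)) →ₗ[R]
    ↥(Ideal.span ({e * e'} : Set R)) where
  toFun x := ⟨(x : R) * e', by
    obtain ⟨r, hr⟩ := Ideal.mem_span_singleton'.mp x.2
    exact Ideal.mem_span_singleton'.mpr ⟨r, by rw [← hr]; ring⟩⟩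
  map_add' x y := by ext; simp [add_mul]
  map_smul' r x := by ext; simp [mul_assoc]

/-- `span{e}/span{e}∩span{e(1-e')} ≃ span{e e'}` for idempotents. -/
noncomputable def quotPartEquiv (e e' : R) (he : e * e = e) (he' : e' * e' = e') :
    (↥(Ideal.span ({e} : Set R)) ⧸
        Submodule.comap (Ideal.span ({e} : Set R)).subtype
          (Ideal.span ({e * (1 - e')} : Set R))) ≃ₗ[R]
      ↥(Ideal.span ({e * e'} : Set R)) := by
  have hker : LinearMap.ker (toPart e e') =
      Submodule.comap (Ideal.span ({e} : Set R)).subtype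
        (Ideal.span ({e * (1 - e')} : Set R)) := by
    ext x
    obtain ⟨r, hr⟩ := Ideal.mem_span_singleton'.mp x.2
    simp only [Submodule.mem_comap, Submodule.subtype_apply]
    constructor
    · intro h
      have h0 : (x : R) * e' = 0 := congrArg Subtype.val h
      refine Ideal.mem_span_singleton'.mpr ⟨r, ?_⟩
      linear_combination hr - e' * hr - h0
    · intro h
      obtain ⟨s, hs⟩ := Ideal.mem_span_singleton'.mp h
      apply Subtype.ext
      show (x : R) * e' = 0
      linear_combination -e' * hs - s * e * he'
  have hsurj : Function.Surjective (toPart e e') := by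
    intro y
    obtain ⟨s, hs⟩ := Ideal.mem_span_singleton'.mp y.2
    refine ⟨⟨s * (e * e'), Ideal.mem_span_singleton'.mpr ⟨s * e', by ring⟩⟩, ?_⟩
    apply Subtype.ext
    show s * (e * e') * e' = (y : R)
    rw [← hs]
    linear_combination s * e * he'
  exact (Submodule.quotEquivOfEq _ _ hker.symm).trans
    ((toPart e e').quotKerEquivOfSurjective hsurj)

end Aux

theorem stmt_18 (R : Type*) [CommRing R] (e e' : R)
    (he : IsIdempotentElem e) (he' : IsIdempotentElem e') :
    Nonempty ((↥(Ideal.span {e}) × ↥(Ideal.span {e'})) ≃ₗ[R]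
      ((↥(Ideal.span {e}) ⧸
          Submodule.comap (Ideal.span {e}).subtype (Ideal.span {e * (1 - e')})) ×
        (↥(Ideal.span {e'}) ⧸
          Submodule.comap (Ideal.span {e'}).subtype (Ideal.span {e' * (1 - e)})) ×
        ↥(Ideal.span {e + e' - 2 * (e * e')}))) := by
  have he1 : e * e = e := he
  have he2 : e' * e' = e' := he'
  -- Idempotency / orthogonality facts
  have hA : (e * e') * (e * e') = e * e' := by linear_combination e' * e' * he1 + e * he2
  have hB : (e * (1 - e')) * (e * (1 - e')) = e * (1 - e') := by
    linear_combination (1 - e') * (1 - e') * he1 + e * he2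
  have hAB : (e * e') * (e * (1 - e')) = 0 := by linear_combination (-(e * e)) * he2
  have hA' : (e' * e) * (e' * e) = e' * e := by linear_combination e * e * he2 + e' * he1
  have hB' : (e' * (1 - e)) * (e' * (1 - e)) = e' * (1 - e) := by
    linear_combination (1 - e) * (1 - e) * he2 + e' * he1
  have hA'B' : (e' * e) * (e' * (1 - e)) = 0 := by linear_combination (-(e' * e')) * he1
  have hPQ : (e * (1 - e')) * (e' * (1 - e)) = 0 := by
    linear_combination (-(e * (1 - e))) * he2
  -- Splittings
  have heq1 : Ideal.span ({e} : Set R) = Ideal.span {e * e' + e * (1 - e')} := by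
    rw [show e * e' + e * (1 - e') = e by ring]
  have heq2 : Ideal.span ({e'} : Set R) = Ideal.span {e' * e + e' * (1 - e)} := by
    rw [show e' * e + e' * (1 - e) = e' by ring]
  have heq3 : Ideal.span ({e + e' - 2 * (e * e')} : Set R) =
      Ideal.span {e * (1 - e') + e' * (1 - e)} := by
    rw [show e * (1 - e') + e' * (1 - e) = e + e' - 2 * (e * e') by ring]
  let E1 := (LinearEquiv.ofEq _ _ heq1).trans (splitEquiv (e * e') (e * (1 - e')) hA hB hAB)
  let E2 := (LinearEquiv.ofEq _ _ heq2).trans (splitEquiv (e' * e) (e' * (1 - e)) hA' hB' hA'B')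
  let E3 := (LinearEquiv.ofEq _ _ heq3).trans
    (splitEquiv (e * (1 - e')) (e' * (1 - e)) hB hB' hPQ)
  let Q1 := quotPartEquiv e e' he1 he2
  let Q2 := quotPartEquiv e' e he2 he1
  let A := ↥(Ideal.span ({e * e'} : Set R))
  let B := ↥(Ideal.span ({e * (1 - e')} : Set R))
  let A' := ↥(Ideal.span ({e' * e} : Set R))
  let B' := ↥(Ideal.span ({e' * (1 - e)} : Set R))
  let P1 : (↥(Ideal.span ({e} : Set R)) × ↥(Ideal.span ({e'} : Set R))) ≃ₗ[R]
      (A × B) × (A' × B') := E1.prodCongr E2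
  let P2 : ((A × B) × (A' × B')) ≃ₗ[R] (A × A') × (B × B') :=
    LinearEquiv.prodProdProdComm R A B A' B'
  let P3 : ((A × A') × (B × B')) ≃ₗ[R] A × (A' × (B × B')) :=
    LinearEquiv.prodAssoc R A A' (B × B')
  let P4 := Q1.symm.prodCongr (Q2.symm.prodCongr E3.symm)
  exact ⟨P1.trans (P2.trans (P3.trans P4))⟩
end
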